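/- If A and B are 4-element subsets of a set X with |A ∩ B| = 3, then the subgroup of Sym(X) generated by Alt(A) ∪ Alt(B) equals Alt(A ∪ B), which is isomorphic to the alternating group on 5 elements. -/

import Mathlib

open Equiv

universe u

/-- The alternating group on an arbitrary type `α`: the subgroup of `Equiv.Perm α`
generated by products of two transpositions. -/
def altGroup (α : Type*) [DecidableEq α] : Subgroup (Equiv.Perm α) :=
  Subgroup.closure {σ | ∃ τ₁ τ₂ : Equiv.Perm α, τ₁.IsSwap ∧ τ₂.IsSwap ∧ σ = τ₁ * τ₂}

/-- The subgroup of permutations of `X` supported on the set `S`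
(i.e. fixing every point outside `S`). -/
def fixingOutside {X : Type u} (S : Set X) : Subgroup (Equiv.Perm X) where
  carrier := {f | ∀ x ∉ S, f x = x}
  one_mem' := fun x _ => rfl
  mul_mem' := by
    intro f g hf hg x hx
    simp only [Set.mem_setOf_eq] at *
    rw [Equiv.Perm.mul_apply, hg x hx, hf x hx]
  inv_mem' := by
    intro f hf x hx
    simp only [Set.mem_setOf_eq] at *
    have := hf x hx
    conv_lhs => rw [← this]
    exact f.symm_apply_apply x

/-- `AltOn S` is the group of even permutations of `X` supported on `S`. -/
def AltOn {X : Type u} [DecidableEq X] (S : Set X) : Subgroup (Equiv.Perm X) :=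
  altGroup X ⊓ fixingOutside S


lemma vec5_injective {X : Type u} {a b c d e : X}
    (hab : a ≠ b) (hac : a ≠ c) (had : a ≠ d) (hae : a ≠ e)
    (hbc : b ≠ c) (hbd : b ≠ d) (hbe : b ≠ e)
    (hcd : c ≠ d) (hce : c ≠ e) (hde : d ≠ e) :
    Function.Injective ![a, b, c, d, e] := by
  intro i j hij
  fin_cases i <;> fin_cases j <;>
    simp only [Matrix.cons_val', Matrix.cons_val_zero, Matrix.cons_val_one, Matrix.head_cons,
      Matrix.cons_val_fin_one, Matrix.head_fin_const, Fin.isValue, Matrix.cons_val_two,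
      Matrix.tail_cons, Matrix.cons_val_three, Matrix.cons_val_four, Matrix.cons_val_succ] at hij <;>
    first
      | rfl
      | exact absurd hij (by assumption)
      | exact absurd hij.symm (by assumption)

lemma vec5_range {X : Type u} (a b c d e : X) :
    Set.range ![a, b, c, d, e] = {a, b, c, d, e} := by
  ext x
  constructor
  · rintro ⟨i, rfl⟩
    fin_cases i <;> simp
  · intro hx
    rcases hx with rfl | rfl | rfl | rfl | rfl
    exacts [⟨0, rfl⟩, ⟨1, rfl⟩, ⟨2, rfl⟩, ⟨3, rfl⟩, ⟨4, rfl⟩]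

namespace AltAux
open Equiv.Perm Subgroup

variable {X : Type u} [DecidableEq X]

lemma prod_swaps_mem_altGroup :
    ∀ l : List (Perm X), (∀ g ∈ l, g.IsSwap) → Even l.length → l.prod ∈ altGroup X
  | [], _, _ => one_mem _
  | [a], _, he => by simp at he
  | a :: b :: tl, h, he => by
    rw [List.prod_cons, List.prod_cons, ← mul_assoc]
    refine mul_mem (subset_closure ⟨a, b, h a (by simp), h b (by simp), rfl⟩)
      (prod_swaps_mem_altGroup tl (fun g hg => h g (by simp [hg])) ?_)
    simpa [Nat.even_add_one, parity_simps] using he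

lemma extendDomain_swap {α : Type*} [DecidableEq α] {p : X → Prop} [DecidablePred p]
    (f : α ≃ Subtype p) (i j : α) :
    (Equiv.swap i j).extendDomain f = Equiv.swap (↑(f i) : X) ↑(f j) := by
  ext x
  by_cases hx : p x
  · rw [Perm.extendDomain_apply_subtype _ f hx]
    rcases eq_or_ne x ↑(f i) with rfl | hxi
    · rw [Equiv.swap_apply_left]
      have : f.symm ⟨(↑(f i) : X), hx⟩ = i := by simp
      rw [this, Equiv.swap_apply_left]
    rcases eq_or_ne x ↑(f j) with rfl | hxj
    · rw [Equiv.swap_apply_right]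
      have : f.symm ⟨(↑(f j) : X), hx⟩ = j := by simp
      rw [this, Equiv.swap_apply_right]
    · rw [Equiv.swap_apply_of_ne_of_ne hxi hxj]
      have hi : f.symm ⟨x, hx⟩ ≠ i := fun h => hxi (by rw [← h]; simp)
      have hj : f.symm ⟨x, hx⟩ ≠ j := fun h => hxj (by rw [← h]; simp)
      rw [Equiv.swap_apply_of_ne_of_ne hi hj]
      simp
  · rw [Perm.extendDomain_apply_not_subtype _ f hx,
      Equiv.swap_apply_of_ne_of_ne (fun h => hx (by rw [h]; exact (f i).2)) (fun h => hx (by rw [h]; exact (f j).2))]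

/-- forward: extension of an even permutation lies in `altGroup X`. -/
lemma extend_mem_altGroup {α : Type*} [DecidableEq α] [Fintype α] {p : X → Prop}
    [DecidablePred p] (f : α ≃ Subtype p) {σ : Perm α} (hσ : Perm.sign σ = 1) :
    σ.extendDomain f ∈ altGroup X := by
  obtain ⟨⟨l, hl1, hl2⟩⟩ := (truncSwapFactors σ).exists_rep
  have hlen : Even l.length :=
    (prod_list_swap_mem_alternatingGroup_iff_even_length hl2).1
      (by rw [hl1]; exact mem_alternatingGroup.2 hσ)
  have : σ.extendDomain f = (l.map (Perm.extendDomainHom f)).prod := by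
    rw [← map_list_prod (Perm.extendDomainHom f) l, hl1]; rfl
  rw [this]
  refine prod_swaps_mem_altGroup _ ?_ (by simpa using hlen)
  intro g hg
  obtain ⟨g', hg', rfl⟩ := List.mem_map.1 hg
  obtain ⟨i, j, hij, rfl⟩ := hl2 g' hg'
  exact ⟨↑(f i), ↑(f j), fun h => hij (f.injective (Subtype.coe_injective h)),
    extendDomain_swap f i j⟩

end AltAux

namespace AltAux
open Equiv.Perm Subgroup

variable {X : Type u} [DecidableEq X]

lemma fix_mem_iff {q : X → Prop} (g : Perm X) (hq : ∀ x, ¬ q x → g x = x) :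
    ∀ x, q x ↔ q (g x) := by
  intro x
  constructor
  · intro hx
    by_contra h'
    have h1 : g (g x) = g x := hq _ h'
    have h2 : g x = x := g.injective h1
    exact h' (h2.symm ▸ hx)
  · intro hx
    by_contra h'
    rw [hq x h'] at hx
    exact h' hx

lemma exists_swap_list {g : Perm X} (hg : g ∈ altGroup X) :
    ∃ L : List (X × X), (∀ pr ∈ L, pr.1 ≠ pr.2) ∧ Even L.length ∧
      (L.map fun pr => Equiv.swap pr.1 pr.2).prod = g := by
  have hK : g ∈ Submonoid.closure
      ({σ | ∃ τ₁ τ₂ : Perm X, τ₁.IsSwap ∧ τ₂.IsSwap ∧ σ = τ₁ * τ₂} : Set (Perm X)) := by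
    have h1 : g ∈ (altGroup X).toSubmonoid := hg
    rw [altGroup, Subgroup.closure_toSubmonoid] at h1
    refine Submonoid.closure_mono ?_ h1
    rintro x (hx | hx)
    · exact hx
    · obtain ⟨τ₁, τ₂, h₁, h₂, h₃⟩ := hx
      obtain ⟨i, j, hij, rfl⟩ := h₁
      obtain ⟨k, l, hkl, rfl⟩ := h₂
      refine ⟨Equiv.swap k l, Equiv.swap i j, ⟨k, l, hkl, rfl⟩, ⟨i, j, hij, rfl⟩, ?_⟩
      have : x = (Equiv.swap i j * Equiv.swap k l)⁻¹ := by
        rw [← h₃]; exact (inv_inv x).symm ▸ rfl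
      rw [this, mul_inv_rev, Equiv.swap_inv, Equiv.swap_inv]
  obtain ⟨l, hl1, hl2⟩ := Submonoid.exists_list_of_mem_closure hK
  clear hg hK
  induction l generalizing g with
  | nil => exact ⟨[], by simp, by simp, by simp [← hl2]⟩
  | cons y tl ih =>
    obtain ⟨τ₁, τ₂, ⟨i, j, hij, rfl⟩, ⟨k, l', hkl, rfl⟩, hy⟩ := hl1 y (by simp)
    obtain ⟨L, hL1, hL2, hL3⟩ := ih (g := tl.prod) (fun z hz => hl1 z (by simp [hz])) rfl
    refine ⟨(i, j) :: (k, l') :: L, ?_, ?_, ?_⟩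
    · rintro pr hpr
      rcases List.mem_cons.1 hpr with rfl | hpr
      · exact hij
      rcases List.mem_cons.1 hpr with rfl | hpr
      · exact hkl
      · exact hL1 _ hpr
    · simpa [Nat.even_add_one, parity_simps] using hL2
    · simp only [List.map_cons, List.prod_cons, hL3, ← hl2, List.prod_cons, hy]
      rw [← mul_assoc]

end AltAux

namespace AltAux
open Equiv.Perm Subgroup

variable {X : Type u} [DecidableEq X]

lemma sign_eq_one_of_extend_mem {α : Type*} [DecidableEq α] [Fintype α] {p : X → Prop}
    [DecidablePred p] (f : α ≃ Subtype p) {σ : Perm α} (hmem : σ.extendDomain f ∈ altGroup X) :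
    Perm.sign σ = 1 := by
  set g := σ.extendDomain f with hgdef
  obtain ⟨L, hL1, hL2, hL3⟩ := exists_swap_list hmem
  classical
  let pts : List X := L.map Prod.fst ++ L.map Prod.snd
  let q : X → Prop := fun x => p x ∨ x ∈ pts
  haveI : Finite (Subtype p) := Finite.of_equiv α f
  have hpfin : ({x | p x} : Set X).Finite := Set.finite_coe_iff.mp ‹Finite (Subtype p)›
  have hqfin : ({x | q x} : Set X).Finite :=
    Set.Finite.subset (hpfin.union (List.finite_toSet pts)) (fun x hx => hx)
  haveI : Fintype (Subtype q) := hqfin.fintype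
  have hgq : ∀ x, ¬ q x → g x = x := fun x hx =>
    Perm.extendDomain_apply_not_subtype σ f (fun hp => hx (Or.inl hp))
  have hmemq : ∀ x, q (g x) ↔ q x := fun x => (fix_mem_iff g hgq x).symm
  have hpts : ∀ pr ∈ L, q pr.1 ∧ q pr.2 := by
    intro pr hpr
    constructor
    · exact Or.inr (List.mem_append.2 (Or.inl (List.mem_map.2 ⟨pr, hpr, rfl⟩)))
    · exact Or.inr (List.mem_append.2 (Or.inr (List.mem_map.2 ⟨pr, hpr, rfl⟩)))
  -- restriction of g to q is an even product of swaps
  have hsub : subtypePerm g hmemq =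
      (L.attach.map (fun pr => Equiv.swap (⟨pr.1.1, (hpts _ pr.2).1⟩ : Subtype q)
        ⟨pr.1.2, (hpts _ pr.2).2⟩)).prod := by
    have hof : ofSubtype ((L.attach.map (fun pr => Equiv.swap
        (⟨pr.1.1, (hpts _ pr.2).1⟩ : Subtype q) ⟨pr.1.2, (hpts _ pr.2).2⟩)).prod) = g := by
      rw [map_list_prod, List.map_map]
      have : (ofSubtype ∘ fun pr : {x // x ∈ L} => Equiv.swap
          (⟨pr.1.1, (hpts _ pr.2).1⟩ : Subtype q) ⟨pr.1.2, (hpts _ pr.2).2⟩) =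
          (fun pr : {x // x ∈ L} => Equiv.swap pr.1.1 pr.1.2) := by
        funext pr
        exact ofSubtype_swap_eq _ _
      rw [this, ← hL3]
      congr 1
      exact List.attach_map_val (f := fun pr : X × X => Equiv.swap pr.1 pr.2)
    ext x
    rw [subtypePerm_apply]
    show g ↑x = _
    rw [← hof, ofSubtype_apply_coe]
  have hsign1 : Perm.sign (subtypePerm g hmemq) = 1 := by
    rw [hsub, sign_prod_list_swap]
    · rw [List.length_map, List.length_attach]
      exact Even.neg_one_pow hL2
    · intro g' hg'
      obtain ⟨pr, hpr, rfl⟩ := List.mem_map.1 hg'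
      exact ⟨_, _, fun h => hL1 _ pr.2 (congrArg Subtype.val h), rfl⟩
  -- now restrict again to p
  have hgp : ∀ x, ¬ p x → g x = x := fun x hx => Perm.extendDomain_apply_not_subtype σ f hx
  have hmemp : ∀ x, p x ↔ p (g x) := fix_mem_iff g hgp
  have h2 : ∀ x : Subtype q, p ↑(subtypePerm g hmemq x) ↔ p ↑x := by
    intro x
    rw [subtypePerm_apply]
    exact (hmemp ↑x).symm
  have h3 : ∀ x : Subtype q, subtypePerm g hmemq x ≠ x → p ↑x := by
    intro x hx
    by_contra hpx
    exact hx (Subtype.ext (hgp _ hpx))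
  have hkey := sign_subtypePerm (subtypePerm g hmemq) h2 h3
  rw [hsign1] at hkey
  -- identify (subtypePerm (subtypePerm g hmemq) h2) with permCongr of σ
  let E : {x : Subtype q // p ↑x} ≃ Subtype p :=
    Equiv.subtypeSubtypeEquivSubtype (fun {x} hx => Or.inl hx)
  let e : α ≃ {x : Subtype q // p ↑x} := f.trans E.symm
  have hEsymm : ∀ s : Subtype p, (↑↑(E.symm s) : X) = ↑s := fun s => by
    simp [E, Equiv.subtypeSubtypeEquivSubtype, Equiv.subtypeSubtypeEquivSubtypeInter,
      Equiv.subtypeSubtypeEquivSubtypeExists, Equiv.subtypeEquivRight]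
    rfl
  have hcongr : e.permCongr σ = subtypePerm (subtypePerm g hmemq) h2 := by
    ext x
    have hx2 : p ↑↑x := x.2
    have hgx : g ↑↑x = ↑(f (σ (f.symm ⟨↑↑x, hx2⟩))) :=
      Perm.extendDomain_apply_subtype σ f hx2
    have hEx : E x = ⟨↑↑x, hx2⟩ := Subtype.ext (by
      simp [E, Equiv.subtypeSubtypeEquivSubtype, Equiv.subtypeSubtypeEquivSubtypeInter,
        Equiv.subtypeSubtypeEquivSubtypeExists, Equiv.subtypeEquivRight]; rfl)
    calc (↑↑(e.permCongr σ x) : X) = ↑↑(E.symm (f (σ (f.symm (E x))))) := by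
          simp [e, Equiv.permCongr_apply]
      _ = ↑(f (σ (f.symm (E x)))) := hEsymm _
      _ = g ↑↑x := by rw [hEx, ← hgx]
      _ = ↑↑(subtypePerm (subtypePerm g hmemq) h2 x) := by simp [subtypePerm_apply]
  have := Equiv.Perm.sign_permCongr e σ
  rw [hcongr, hkey] at this
  exact this.symm

end AltAux


open Equiv.Perm Subgroup

/-- even permutations of `Fin 5` fixing `i`. -/
def stabAlt (i : Fin 5) : Subgroup (Perm (Fin 5)) where
  carrier := {σ | Perm.sign σ = 1 ∧ σ i = i}
  one_mem' := ⟨map_one _, rfl⟩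
  mul_mem' := fun {a b} ha hb => ⟨by rw [map_mul, ha.1, hb.1, one_mul],
    by rw [Perm.mul_apply, hb.2, ha.2]⟩
  inv_mem' := fun {a} ha => ⟨by rw [map_inv, ha.1, inv_one],
    by conv_lhs => rw [← ha.2]; · exact a.symm_apply_apply i⟩

lemma mem_stabAlt {i : Fin 5} {σ : Perm (Fin 5)} : σ ∈ stabAlt i ↔ Perm.sign σ = 1 ∧ σ i = i :=
  Iff.rfl

lemma perm_eq_of_five {c d : Perm (Fin 5)} (h0 : c 0 = d 0) (h1 : c 1 = d 1) (h2 : c 2 = d 2)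
    (h3 : c 3 = d 3) (h4 : c 4 = d 4) : c = d := by
  ext x
  have hx : x = 0 ∨ x = 1 ∨ x = 2 ∨ x = 3 ∨ x = 4 := by omega
  rcases hx with rfl | rfl | rfl | rfl | rfl <;> simp [h0, h1, h2, h3, h4]

lemma fin5_gen : alternatingGroup (Fin 5) ≤ stabAlt 4 ⊔ stabAlt 0 := by
  rw [← closure_three_cycles_eq_alternating, closure_le]
  intro c hc
  simp only [Set.mem_setOf_eq] at hc
  by_cases h4 : c 4 = 4
  · exact mem_sup_left (mem_stabAlt.2 ⟨hc.sign, h4⟩)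
  by_cases h0 : c 0 = 0
  · exact mem_sup_right (mem_stabAlt.2 ⟨hc.sign, h0⟩)
  have hc3 : c (c (c 0)) = 0 := by
    have h1 : c ^ 3 = 1 := by rw [← hc.orderOf]; exact pow_orderOf_eq_one c
    have := congrArg (fun σ : Perm (Fin 5) => σ 0) h1
    simpa [pow_succ, Perm.mul_apply] using this
  by_cases h04 : c 0 = 4
  · -- c = (0 4 t) with t = c 4
    obtain ⟨t, hc4t⟩ : ∃ t, c 4 = t := ⟨c 4, rfl⟩
    have hct : c t = 0 := by rw [← hc4t]; rwa [h04] at hc3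
    have ht0 : t ≠ 0 := fun h => h0 (h ▸ hct)
    have ht4 : t ≠ 4 := fun h => h4 (h ▸ hc4t)
    have htv : t = 1 ∨ t = 2 ∨ t = 3 := by
      have : ∀ s : Fin 5, s ≠ 0 → s ≠ 4 → s = 1 ∨ s = 2 ∨ s = 3 := by decide
      exact this t ht0 ht4
    have hsupp : ({0, t, 4} : Finset (Fin 5)) = c.support := by
      refine Finset.eq_of_subset_of_card_le ?_ ?_
      · intro y hy
        simp only [Finset.mem_insert, Finset.mem_singleton] at hy
        rcases hy with rfl | rfl | rfl
        · exact Perm.mem_support.2 h0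
        · exact Perm.mem_support.2 (fun h => ht0 (hct ▸ h).symm)
        · exact Perm.mem_support.2 h4
      · rw [hc.card_support]
        rcases htv with rfl | rfl | rfl <;> decide
    have hfix : ∀ x : Fin 5, x ∉ ({0, t, 4} : Finset (Fin 5)) → c x = x := by
      intro x hx
      exact Perm.notMem_support.1 (fun h => hx (hsupp ▸ h))
    rcases htv with rfl | rfl | rfl
    · have hceq : c = (swap 4 1 * swap 1 2) * (swap 2 1 * swap 1 0) :=
        perm_eq_of_five (by rw [h04]; decide) (by rw [hct]; decide)
          (by rw [hfix 2 (by decide)]; decide) (by rw [hfix 3 (by decide)]; decide)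
          (by rw [hc4t]; decide)
      rw [hceq]
      exact mul_mem (mem_sup_right (mem_stabAlt.2 ⟨by decide, by decide⟩))
        (mem_sup_left (mem_stabAlt.2 ⟨by decide, by decide⟩))
    · have hceq : c = (swap 4 2 * swap 2 1) * (swap 1 2 * swap 2 0) :=
        perm_eq_of_five (by rw [h04]; decide) (by rw [hfix 1 (by decide)]; decide)
          (by rw [hct]; decide) (by rw [hfix 3 (by decide)]; decide)
          (by rw [hc4t]; decide)
      rw [hceq]
      exact mul_mem (mem_sup_right (mem_stabAlt.2 ⟨by decide, by decide⟩))
        (mem_sup_left (mem_stabAlt.2 ⟨by decide, by decide⟩))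
    · have hceq : c = (swap 4 3 * swap 3 1) * (swap 1 3 * swap 3 0) :=
        perm_eq_of_five (by rw [h04]; decide) (by rw [hfix 1 (by decide)]; decide)
          (by rw [hfix 2 (by decide)]; decide) (by rw [hct]; decide)
          (by rw [hc4t]; decide)
      rw [hceq]
      exact mul_mem (mem_sup_right (mem_stabAlt.2 ⟨by decide, by decide⟩))
        (mem_sup_left (mem_stabAlt.2 ⟨by decide, by decide⟩))
  · -- c = (0 t 4) with t = c 0, c t = 4, c 4 = 0
    obtain ⟨t, hc0t⟩ : ∃ t, c 0 = t := ⟨c 0, rfl⟩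
    rw [hc0t] at hc3
    have ht0 : t ≠ 0 := fun h => h0 (h ▸ hc0t)
    have ht4 : t ≠ 4 := fun h => h04 (h ▸ hc0t)
    have hctt : c t ≠ t := fun h => ht0 (c.injective (h.trans hc0t.symm))
    have hct4 : c t = 4 := by
      by_contra hne
      have hct0 : c t ≠ 0 := by
        intro h
        have h2 : c (c t) = t := by rw [h, hc0t]
        exact ht0 (h2.symm.trans hc3)
      have hsupp : ({0, t, c t, 4} : Finset (Fin 5)) ⊆ c.support := by
        intro y hy
        simp only [Finset.mem_insert, Finset.mem_singleton] at hy
        rcases hy with rfl | rfl | rfl | rfl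
        · exact Perm.mem_support.2 h0
        · exact Perm.mem_support.2 hctt
        · exact Perm.mem_support.2
            (Perm.mem_support.1 (Perm.apply_mem_support.2 (Perm.mem_support.2 hctt)))
        · exact Perm.mem_support.2 h4
      have hcard : ({0, t, c t, 4} : Finset (Fin 5)).card = 4 := by
        rw [Finset.card_insert_of_notMem, Finset.card_insert_of_notMem,
          Finset.card_insert_of_notMem, Finset.card_singleton]
        · simpa using hne
        · simp only [Finset.mem_insert, Finset.mem_singleton]
          push_neg
          exact ⟨fun h => hctt h.symm, ht4⟩
        · simp only [Finset.mem_insert, Finset.mem_singleton]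
          push_neg
          exact ⟨fun h => ht0 h.symm, fun h => hct0 h.symm, by decide⟩
      have := Finset.card_le_card hsupp
      rw [hc.card_support, hcard] at this
      omega
    have hc40 : c 4 = 0 := by rwa [hct4] at hc3
    have htv : t = 1 ∨ t = 2 ∨ t = 3 := by
      have : ∀ s : Fin 5, s ≠ 0 → s ≠ 4 → s = 1 ∨ s = 2 ∨ s = 3 := by decide
      exact this t ht0 ht4
    have hsupp : ({0, t, 4} : Finset (Fin 5)) = c.support := by
      refine Finset.eq_of_subset_of_card_le ?_ ?_
      · intro y hy
        simp only [Finset.mem_insert, Finset.mem_singleton] at hy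
        rcases hy with rfl | rfl | rfl
        · exact Perm.mem_support.2 h0
        · exact Perm.mem_support.2 hctt
        · exact Perm.mem_support.2 h4
      · rw [hc.card_support]
        rcases htv with rfl | rfl | rfl <;> decide
    have hfix : ∀ x : Fin 5, x ∉ ({0, t, 4} : Finset (Fin 5)) → c x = x := by
      intro x hx
      exact Perm.notMem_support.1 (fun h => hx (hsupp ▸ h))
    rcases htv with rfl | rfl | rfl
    · have hceq : c = (swap 0 1 * swap 1 2) * (swap 2 1 * swap 1 4) :=
        perm_eq_of_five (by rw [hc0t]; decide) (by rw [hct4]; decide)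
          (by rw [hfix 2 (by decide)]; decide) (by rw [hfix 3 (by decide)]; decide)
          (by rw [hc40]; decide)
      rw [hceq]
      exact mul_mem (mem_sup_left (mem_stabAlt.2 ⟨by decide, by decide⟩))
        (mem_sup_right (mem_stabAlt.2 ⟨by decide, by decide⟩))
    · have hceq : c = (swap 0 2 * swap 2 1) * (swap 1 2 * swap 2 4) :=
        perm_eq_of_five (by rw [hc0t]; decide) (by rw [hfix 1 (by decide)]; decide)
          (by rw [hct4]; decide) (by rw [hfix 3 (by decide)]; decide)
          (by rw [hc40]; decide)
      rw [hceq]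
      exact mul_mem (mem_sup_left (mem_stabAlt.2 ⟨by decide, by decide⟩))
        (mem_sup_right (mem_stabAlt.2 ⟨by decide, by decide⟩))
    · have hceq : c = (swap 0 3 * swap 3 1) * (swap 1 3 * swap 3 4) :=
        perm_eq_of_five (by rw [hc0t]; decide) (by rw [hfix 1 (by decide)]; decide)
          (by rw [hfix 2 (by decide)]; decide) (by rw [hct4]; decide)
          (by rw [hc40]; decide)
      rw [hceq]
      exact mul_mem (mem_sup_left (mem_stabAlt.2 ⟨by decide, by decide⟩))
        (mem_sup_right (mem_stabAlt.2 ⟨by decide, by decide⟩))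

namespace AltAux
open Equiv Equiv.Perm Subgroup

variable {X : Type u} [DecidableEq X]

lemma extend_recover {α : Type*} [DecidableEq α] {p : X → Prop} [DecidablePred p]
    (f : α ≃ Subtype p) (h : Equiv.Perm X) (hh : ∀ x, ¬ p x → h x = x) :
    (((Equiv.permCongr f).symm (h.subtypePerm (fun x => (fix_mem_iff h hh x).symm))) : Equiv.Perm α).extendDomain f
      = h := by
  ext x
  by_cases hx : p x
  · rw [Perm.extendDomain_apply_subtype _ _ hx]
    simp [Equiv.permCongr_symm, Equiv.permCongr_apply, subtypePerm_apply]
  · rw [Perm.extendDomain_apply_not_subtype _ _ hx, hh x hx]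

end AltAux

open AltAux Subgroup Equiv.Perm

/-- If `A` and `B` are 4-element subsets of `X` with `|A ∩ B| = 3`, then the subgroup of
`Sym(X)` generated by `Alt(A) ∪ Alt(B)` equals `Alt(A ∪ B)`, which is isomorphic to the
alternating group on 5 elements. -/
theorem altOn_sup_altOn (X : Type u) [DecidableEq X] (A B : Set X)
    (hA : A.ncard = 4) (hB : B.ncard = 4) (hAB : (A ∩ B).ncard = 3) :
    AltOn A ⊔ AltOn B = AltOn (A ∪ B) ∧
    Nonempty ((AltOn (A ∪ B) : Subgroup (Equiv.Perm X)) ≃* alternatingGroup (Fin 5)) := by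
  classical
  -- finiteness
  have hAfin : A.Finite := by
    by_contra h
    rw [Set.Infinite.ncard h] at hA; exact absurd hA (by norm_num)
  have hBfin : B.Finite := by
    by_contra h
    rw [Set.Infinite.ncard h] at hB; exact absurd hB (by norm_num)
  -- cardinalities
  have hdA : (A \ B).ncard = 1 := by
    have h1 := Set.ncard_diff_add_ncard_of_subset (Set.inter_subset_left (s := A) (t := B)) hAfin
    rw [Set.diff_self_inter] at h1
    omega
  have hdB : (B \ A).ncard = 1 := by
    have h1 := Set.ncard_diff_add_ncard_of_subset (Set.inter_subset_left (s := B) (t := A)) hBfin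
    rw [Set.diff_self_inter, Set.inter_comm] at h1
    omega
  obtain ⟨a, ha⟩ := Set.ncard_eq_one.mp hdA
  obtain ⟨b, hb⟩ := Set.ncard_eq_one.mp hdB
  obtain ⟨c0, c1, c2, h01, h02, h12, hI⟩ := Set.ncard_eq_three.mp hAB
  -- membership facts
  have haAB : a ∈ A \ B := ha ▸ rfl
  have hbBA : b ∈ B \ A := hb ▸ rfl
  have hc0 : c0 ∈ A ∩ B := by rw [hI]; simp
  have hc1 : c1 ∈ A ∩ B := by rw [hI]; simp
  have hc2 : c2 ∈ A ∩ B := by rw [hI]; simp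
  have hac0 : a ≠ c0 := fun h => haAB.2 (h ▸ hc0.2)
  have hac1 : a ≠ c1 := fun h => haAB.2 (h ▸ hc1.2)
  have hac2 : a ≠ c2 := fun h => haAB.2 (h ▸ hc2.2)
  have hbc0 : b ≠ c0 := fun h => hbBA.2 (h ▸ hc0.1)
  have hbc1 : b ≠ c1 := fun h => hbBA.2 (h ▸ hc1.1)
  have hbc2 : b ≠ c2 := fun h => hbBA.2 (h ▸ hc2.1)
  have hab : a ≠ b := fun h => hbBA.2 (h ▸ haAB.1)
  -- set descriptions
  have hAeq : A = {a, c0, c1, c2} := by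
    rw [← Set.diff_union_inter A B, ha, hI, Set.singleton_union]
  have hBeq : B = {b, c0, c1, c2} := by
    rw [← Set.diff_union_inter B A, hb, Set.inter_comm, hI, Set.singleton_union]
  have hSeq : A ∪ B = {a, c0, c1, c2, b} := by
    rw [hAeq, hBeq]
    ext x
    simp only [Set.mem_union, Set.mem_insert_iff, Set.mem_singleton_iff]
    tauto
  -- the equivalence Fin 5 ≃ A ∪ B
  set gfun : Fin 5 → X := ![a, c0, c1, c2, b] with hgfun
  have hginj : Function.Injective gfun :=
    vec5_injective hac0 hac1 hac2 hab h01 h02 (fun h => (hbc0 h.symm).elim) h12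
      (fun h => (hbc1 h.symm).elim) (fun h => (hbc2 h.symm).elim)
  have hrange : Set.range gfun = A ∪ B := by rw [hSeq, hgfun, vec5_range]
  set f : Fin 5 ≃ Subtype (· ∈ A ∪ B) :=
    (Equiv.ofInjective gfun hginj).trans (Equiv.setCongr hrange) with hfdef
  have hf0 : (↑(f 0) : X) = a := rfl
  have hf4 : (↑(f 4) : X) = b := rfl
  set Ψ : Equiv.Perm (Fin 5) →* Equiv.Perm X := Equiv.Perm.extendDomainHom f with hΨdef
  -- basic facts about Ψ
  have hΨfix : ∀ (σ : Equiv.Perm (Fin 5)) (x : X), x ∉ A ∪ B → Ψ σ x = x := fun σ x hx =>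
    Perm.extendDomain_apply_not_subtype σ f hx
  have hΨalt : ∀ σ : Equiv.Perm (Fin 5), Equiv.Perm.sign σ = 1 → Ψ σ ∈ altGroup X := fun σ h =>
    extend_mem_altGroup f h
  have hΨsign : ∀ σ : Equiv.Perm (Fin 5), Ψ σ ∈ altGroup X → Equiv.Perm.sign σ = 1 := fun σ h =>
    sign_eq_one_of_extend_mem f h
  have hΨrec : ∀ g : Equiv.Perm X, (∀ x ∉ A ∪ B, g x = x) → ∃ σ, Ψ σ = g := by
    intro g hg
    exact ⟨(Equiv.permCongr f).symm (g.subtypePerm (fun x => (fix_mem_iff g hg x).symm)), extend_recover f g hg⟩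
  -- stabilizer facts
  have hstabA : ∀ σ : Equiv.Perm (Fin 5), σ ∈ stabAlt 4 → Ψ σ ∈ AltOn A := by
    intro σ hσ
    refine Subgroup.mem_inf.2 ⟨hΨalt σ hσ.1, ?_⟩
    intro x hx
    by_cases hxS : x ∈ A ∪ B
    · have hxb : x = b := by
        rw [hSeq] at hxS
        rw [hAeq] at hx
        simp only [Set.mem_insert_iff, Set.mem_singleton_iff] at hxS hx
        tauto
      rw [hxb]
      calc Ψ σ b = Ψ σ ↑(f 4) := by rw [hf4]
        _ = ↑(f (σ 4)) := Perm.extendDomain_apply_image σ f 4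
        _ = ↑(f 4) := by rw [hσ.2]
        _ = b := hf4
    · exact hΨfix σ x hxS
  have hstabB : ∀ σ : Equiv.Perm (Fin 5), σ ∈ stabAlt 0 → Ψ σ ∈ AltOn B := by
    intro σ hσ
    refine Subgroup.mem_inf.2 ⟨hΨalt σ hσ.1, ?_⟩
    intro x hx
    by_cases hxS : x ∈ A ∪ B
    · have hxa : x = a := by
        rw [hSeq] at hxS
        rw [hBeq] at hx
        simp only [Set.mem_insert_iff, Set.mem_singleton_iff] at hxS hx
        tauto
      rw [hxa]
      calc Ψ σ a = Ψ σ ↑(f 0) := by rw [hf0]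
        _ = ↑(f (σ 0)) := Perm.extendDomain_apply_image σ f 0
        _ = ↑(f 0) := by rw [hσ.2]
        _ = a := hf0
    · exact hΨfix σ x hxS
  constructor
  · -- the sup equality
    apply le_antisymm
    · refine sup_le ?_ ?_ <;>
        refine inf_le_inf_left _ ?_ <;>
        intro g hg x hx <;>
        exact hg x (fun h => hx (by simp [h]))
    · intro g hg
      rw [AltOn, Subgroup.mem_inf] at hg
      obtain ⟨σ, hσg⟩ := hΨrec g hg.2
      have hsign : Equiv.Perm.sign σ = 1 := hΨsign σ (hσg ▸ hg.1)
      have hσsup : σ ∈ stabAlt 4 ⊔ stabAlt 0 :=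
        fin5_gen (Equiv.Perm.mem_alternatingGroup.2 hsign)
      have h1 : (stabAlt 4).map Ψ ≤ AltOn A := by
        rintro _ ⟨τ, hτ, rfl⟩
        exact hstabA τ hτ
      have h2 : (stabAlt 0).map Ψ ≤ AltOn B := by
        rintro _ ⟨τ, hτ, rfl⟩
        exact hstabB τ hτ
      have : Ψ σ ∈ (stabAlt 4).map Ψ ⊔ (stabAlt 0).map Ψ := by
        rw [← Subgroup.map_sup]
        exact Subgroup.mem_map_of_mem Ψ hσsup
      rw [← hσg]
      exact sup_le_sup h1 h2 this
  · -- the isomorphism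
    refine ⟨?_⟩
    have hmem : ∀ σ : alternatingGroup (Fin 5), Ψ ↑σ ∈ AltOn (A ∪ B) := by
      intro σ
      exact Subgroup.mem_inf.2
        ⟨hΨalt σ (Equiv.Perm.mem_alternatingGroup.1 σ.2), fun x hx => hΨfix σ x hx⟩
    let φ : alternatingGroup (Fin 5) →* AltOn (A ∪ B) :=
      (Ψ.comp (alternatingGroup (Fin 5)).subtype).codRestrict _ hmem
    have hbij : Function.Bijective φ := by
      constructor
      · intro x y hxy
        have : Ψ ↑x = Ψ ↑y := congrArg Subtype.val hxy
        exact Subtype.ext (Equiv.Perm.extendDomainHom_injective f this)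
      · rintro ⟨g, hg⟩
        rw [AltOn, Subgroup.mem_inf] at hg
        obtain ⟨σ, hσg⟩ := hΨrec g hg.2
        have hsign : Equiv.Perm.sign σ = 1 := hΨsign σ (hσg ▸ hg.1)
        exact ⟨⟨σ, Equiv.Perm.mem_alternatingGroup.2 hsign⟩, Subtype.ext hσg⟩
    exact (MulEquiv.ofBijective φ hbij).symm
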